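/- Let α ∈ (0,1], let γ, δ, η, ζ ≥ 0 with d := ηδ + γζ + γη/α > 0, and let G be the associated general Green's function. Define g₁(t) := min{ (αδ + γt^α)/(αδ + γ), (αζ + η(1 − t^α))/(αζ + η) }. Then for all t, s ∈ [0,1], g₁(t)·G(s,s) ≤ G(t,s) ≤ G(s,s). -/

import Mathlib

set_option maxHeartbeats 1000000 in
/-- Bounds for the general Green's function:
`g₁(t)·G(s,s) ≤ G(t,s) ≤ G(s,s)` for all `t, s ∈ [0,1]`, where
`g₁(t) = min{(αδ + γt^α)/(αδ + γ), (αζ + η(1 − t^α))/(αζ + η)}`. -/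
theorem greens_function_bounds
    (α : ℝ) (hα : α ∈ Set.Ioc (0:ℝ) 1)
    (γ δ η ζ : ℝ) (hγ : 0 ≤ γ) (hδ : 0 ≤ δ) (hη : 0 ≤ η) (hζ : 0 ≤ ζ)
    (d : ℝ) (hd : d = η * δ + γ * ζ + γ * η / α) (hdpos : 0 < d)
    (G : ℝ → ℝ → ℝ)
    (hG : ∀ t s : ℝ, G t s = if s ≤ t
        then (1 / d) * (δ + (γ / α) * s ^ α) * (ζ + (η / α) * (1 - t ^ α))
        else (1 / d) * (δ + (γ / α) * t ^ α) * (ζ + (η / α) * (1 - s ^ α)))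
    (g₁ : ℝ → ℝ)
    (hg₁ : ∀ t : ℝ, g₁ t = min ((α * δ + γ * t ^ α) / (α * δ + γ))
        ((α * ζ + η * (1 - t ^ α)) / (α * ζ + η))) :
    ∀ t ∈ Set.Icc (0:ℝ) 1, ∀ s ∈ Set.Icc (0:ℝ) 1,
      g₁ t * G s s ≤ G t s ∧ G t s ≤ G s s := by

  obtain ⟨hα0, hα1⟩ := hα
  -- positivity of denominators
  have hδγ : 0 < α * δ + γ := by
    by_contra hcon
    push_neg at hcon
    have hδ0 : δ = 0 := by nlinarith
    have hγ0 : γ = 0 := by nlinarith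
    rw [hδ0, hγ0] at hd
    simp at hd
    linarith
  have hζη : 0 < α * ζ + η := by
    by_contra hcon
    push_neg at hcon
    have hζ0 : ζ = 0 := by nlinarith
    have hη0 : η = 0 := by nlinarith
    rw [hζ0, hη0] at hd
    simp at hd
    linarith
  set c := γ / α with hc
  set e := η / α with he
  have hc0 : 0 ≤ c := div_nonneg hγ hα0.le
  have he0 : 0 ≤ e := div_nonneg hη hα0.le
  have hγc : γ = α * c := by rw [hc]; field_simp [hα0.ne']
  have hηe : η = α * e := by rw [he]; field_simp [hα0.ne']
  have hδc : 0 < δ + c := by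
    have : 0 < α * (δ + c) := by rw [hγc] at hδγ; linarith [hδγ]
    nlinarith
  have hζe : 0 < ζ + e := by
    have : 0 < α * (ζ + e) := by rw [hηe] at hζη; linarith [hζη]
    nlinarith
  have hd0 : 0 ≤ 1 / d := by positivity
  intro t ht s hs
  obtain ⟨ht0, ht1⟩ := ht
  obtain ⟨hs0, hs1⟩ := hs
  have htα0 : 0 ≤ t ^ α := Real.rpow_nonneg ht0 α
  have htα1 : t ^ α ≤ 1 := Real.rpow_le_one ht0 ht1 hα0.le
  have hsα0 : 0 ≤ s ^ α := Real.rpow_nonneg hs0 α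
  have hsα1 : s ^ α ≤ 1 := Real.rpow_le_one hs0 hs1 hα0.le
  -- g₁ bounds
  have hm0 : 0 ≤ g₁ t := by
    rw [hg₁]
    apply le_min
    · apply div_nonneg (by nlinarith) hδγ.le
    · apply div_nonneg (by nlinarith) hζη.le
  have hm1 : g₁ t * (δ + c) ≤ δ + c * t ^ α := by
    have h1 : g₁ t ≤ (α * δ + γ * t ^ α) / (α * δ + γ) := by
      rw [hg₁]; exact min_le_left _ _
    have heq : (α * δ + γ * t ^ α) / (α * δ + γ) = (δ + c * t ^ α) / (δ + c) := by
      rw [hγc, show α * δ + α * c * t ^ α = α * (δ + c * t ^ α) by ring,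
        show α * δ + α * c = α * (δ + c) by ring,
        mul_div_mul_left _ _ (ne_of_gt hα0)]
    rw [heq] at h1
    calc g₁ t * (δ + c) ≤ (δ + c * t ^ α) / (δ + c) * (δ + c) := by
          apply mul_le_mul_of_nonneg_right h1 hδc.le
      _ = δ + c * t ^ α := by field_simp
  have hm2 : g₁ t * (ζ + e) ≤ ζ + e * (1 - t ^ α) := by
    have h1 : g₁ t ≤ (α * ζ + η * (1 - t ^ α)) / (α * ζ + η) := by
      rw [hg₁]; exact min_le_right _ _
    have heq : (α * ζ + η * (1 - t ^ α)) / (α * ζ + η) = (ζ + e * (1 - t ^ α)) / (ζ + e) := by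
      rw [hηe, show α * ζ + α * e * (1 - t ^ α) = α * (ζ + e * (1 - t ^ α)) by ring,
        show α * ζ + α * e = α * (ζ + e) by ring,
        mul_div_mul_left _ _ (ne_of_gt hα0)]
    rw [heq] at h1
    calc g₁ t * (ζ + e) ≤ (ζ + e * (1 - t ^ α)) / (ζ + e) * (ζ + e) := by
          apply mul_le_mul_of_nonneg_right h1 hζe.le
      _ = ζ + e * (1 - t ^ α) := by field_simp
  rw [hG t s, hG s s, if_pos le_rfl]
  by_cases hst : s ≤ t
  · rw [if_pos hst]
    have hstα : s ^ α ≤ t ^ α := Real.rpow_le_rpow hs0 hst hα0.le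
    have hA : 0 ≤ 1 / d * (δ + c * s ^ α) := by
      apply mul_nonneg hd0; nlinarith
    constructor
    · have key : g₁ t * (ζ + e * (1 - s ^ α)) ≤ ζ + e * (1 - t ^ α) := by
        have h := mul_le_mul_of_nonneg_left
          (show ζ + e * (1 - s ^ α) ≤ ζ + e by nlinarith) hm0
        linarith [hm2]
      have h := mul_le_mul_of_nonneg_left key hA
      nlinarith [h]
    · have key : ζ + e * (1 - t ^ α) ≤ ζ + e * (1 - s ^ α) := by nlinarith
      have h := mul_le_mul_of_nonneg_left key hA
      linarith [h]
  · rw [if_neg hst]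
    have hts : t ≤ s := le_of_not_ge hst
    have htsα : t ^ α ≤ s ^ α := Real.rpow_le_rpow ht0 hts hα0.le
    have hB : 0 ≤ 1 / d * (ζ + e * (1 - s ^ α)) := by
      apply mul_nonneg hd0; nlinarith
    constructor
    · have key : g₁ t * (δ + c * s ^ α) ≤ δ + c * t ^ α := by
        have h := mul_le_mul_of_nonneg_left
          (show δ + c * s ^ α ≤ δ + c by nlinarith) hm0
        linarith [hm1]
      have h := mul_le_mul_of_nonneg_left key hB
      nlinarith [h]
    · have key : δ + c * t ^ α ≤ δ + c * s ^ α := by nlinarith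
      have h := mul_le_mul_of_nonneg_left key hB
      nlinarith [h]
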